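/- Let A ∈ ℂ^{n×m} have all entries nonzero (A_{ij} ≠ 0 for all i,j). Then the one-step Gram-matrix bound holds with equality: Σ_{i,j} (|A_{ij}|²/‖A‖_F²) · ( A − (1/A_{ij})·A e_j e_i^T A )* ( A − (1/A_{ij})·A e_j e_i^T A ) = 2 A*A − (2/‖A‖_F²)·(A*A)². -/

import Mathlib

open Matrix Finset

/-- Squared Frobenius norm of a complex matrix, `‖A‖_F² = tr(AᴴA)`. -/
noncomputable def frobSq {n m : ℕ} (A : Matrix (Fin n) (Fin m) ℂ) : ℝ :=
  ∑ i, ∑ j, ‖A i j‖ ^ 2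

lemma real_smul_mat {a b : ℕ} (r : ℝ) (M : Matrix (Fin a) (Fin b) ℂ) : r • M = (r : ℂ) • M := by
  ext p q; simp [Complex.real_smul]

lemma cT_std {a b : ℕ} (i : Fin a) (j : Fin b) :
    (Matrix.single i j (1:ℂ))ᴴ = Matrix.single j i (1:ℂ) := by
  ext p q
  simp [Matrix.conjTranspose_apply, Matrix.single, Matrix.of_apply, apply_ite star,
    and_comm]

lemma std_G_std {a b : ℕ} (G : Matrix (Fin b) (Fin b) ℂ) (i : Fin a) (j : Fin b) :
    Matrix.single i j (1:ℂ) * G * Matrix.single j i (1:ℂ) = G j j • Matrix.single i i (1:ℂ) := by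
  ext p q
  simp only [Matrix.mul_apply, Matrix.single, Matrix.of_apply, ite_and, Finset.sum_ite_eq,
    Finset.sum_ite_eq', smul_ite, Matrix.smul_apply, ite_mul, one_mul, zero_mul, mul_ite, mul_one,
    mul_zero, Finset.mem_univ, if_true, smul_eq_mul, smul_zero]
  by_cases h1 : i = p <;> by_cases h2 : i = q <;> simp [h1, h2]

lemma sum_std_one {a : ℕ} : ∑ i : Fin a, Matrix.single i i (1:ℂ) = 1 := by
  ext p q
  by_cases h : p = q <;>
    simp [Matrix.sum_apply, Matrix.single, Matrix.one_apply, h, Finset.sum_ite_eq,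
      and_comm, Finset.filter_eq_empty_iff]

lemma sum_smul_std {a b : ℕ} (A : Matrix (Fin a) (Fin b) ℂ) :
    ∑ i, ∑ j, (A i j) • Matrix.single i j (1:ℂ) = A := by
  conv_rhs => rw [matrix_eq_sum_single A]
  simp [smul_single]

lemma sum_star_smul_std {a b : ℕ} (A : Matrix (Fin a) (Fin b) ℂ) :
    ∑ i, ∑ j, star (A i j) • Matrix.single j i (1:ℂ) = Aᴴ := by
  rw [Finset.sum_comm]
  conv_rhs => rw [matrix_eq_sum_single Aᴴ]
  simp [smul_single, Matrix.conjTranspose_apply]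

lemma frobSq_eq_trace {n m : ℕ} (A : Matrix (Fin n) (Fin m) ℂ) :
    ((frobSq A : ℝ) : ℂ) = ∑ j, (Aᴴ * A) j j := by
  rw [frobSq]
  push_cast
  rw [Finset.sum_comm]
  refine Finset.sum_congr rfl fun j _ => ?_
  rw [Matrix.mul_apply]
  refine Finset.sum_congr rfl fun k _ => ?_
  rw [Matrix.conjTranspose_apply, mul_comm]
  exact (Complex.mul_conj' (A k j)).symm

lemma term_eq {n m : ℕ} (A : Matrix (Fin n) (Fin m) ℂ) (i : Fin n) (j : Fin m)
    (hc : A i j ≠ 0) :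
    (‖A i j‖ ^ 2 / frobSq A) •
        ((A - (A i j)⁻¹ • (A * Matrix.single j i (1 : ℂ) * A))ᴴ *
          (A - (A i j)⁻¹ • (A * Matrix.single j i (1 : ℂ) * A)))
    = ((‖A i j‖^2 : ℝ) / (frobSq A : ℂ)) • (Aᴴ * A)
      - (A i j / (frobSq A : ℂ)) • (Aᴴ * (Matrix.single i j (1:ℂ) * (Aᴴ * A)))
      - (star (A i j) / (frobSq A : ℂ)) • ((Aᴴ * A) * (Matrix.single j i (1:ℂ) * A))
      + (((Aᴴ * A) j j) / (frobSq A : ℂ)) • (Aᴴ * (Matrix.single i i (1:ℂ) * A)) := by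
  have hs : (starRingEnd ℂ) (A i j) ≠ 0 := star_ne_zero.2 hc
  have key : ((‖A i j‖ : ℂ))^2 = A i j * star (A i j) := (Complex.mul_conj' (A i j)).symm
  rw [real_smul_mat]
  push_cast
  rw [key]
  rw [conjTranspose_sub, conjTranspose_smul, conjTranspose_mul, conjTranspose_mul, cT_std]
  rw [Matrix.sub_mul, Matrix.mul_sub, Matrix.mul_sub]
  simp only [Matrix.smul_mul, Matrix.mul_smul, smul_smul, ← Matrix.mul_assoc]
  have h4 : Aᴴ * Matrix.single i j (1:ℂ) * Aᴴ * A * Matrix.single j i (1:ℂ) * A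
      = ((Aᴴ*A) j j) • (Aᴴ * Matrix.single i i (1:ℂ) * A) := by
    calc Aᴴ * Matrix.single i j (1:ℂ) * Aᴴ * A * Matrix.single j i (1:ℂ) * A
        = Aᴴ * (Matrix.single i j (1:ℂ) * (Aᴴ * A) * Matrix.single j i (1:ℂ)) * A := by
          simp only [Matrix.mul_assoc]
      _ = ((Aᴴ*A) j j) • (Aᴴ * Matrix.single i i (1:ℂ) * A) := by
          rw [std_G_std]
          simp only [Matrix.mul_smul, Matrix.smul_mul]
  rw [h4]
  simp only [smul_smul, star_inv₀]
  match_scalars <;> field_simp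
  · have hs' : star (A i j) ≠ 0 := hs
    rw [div_mul_cancel_left₀ hs', one_div]
  · have hs' : star (A i j) ≠ 0 := hs
    rw [mul_div_mul_left _ _ hs']

/-- **Theorem (one-step Gram identity when all entries are nonzero).**
If every entry of `A ∈ ℂ^{n×m}` is nonzero, then
`∑_{i,j} (|A_{ij}|²/‖A‖_F²) (A − A_{ij}⁻¹ A e_j e_iᵀ A)ᴴ (A − A_{ij}⁻¹ A e_j e_iᵀ A)
  = 2 AᴴA − (2/‖A‖_F²)(AᴴA)²`. -/
theorem rplu_expected_gram_eq {n m : ℕ} (A : Matrix (Fin n) (Fin m) ℂ)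
    (hA : ∀ i j, A i j ≠ 0) :
    (∑ i : Fin n, ∑ j : Fin m,
      (‖A i j‖ ^ 2 / frobSq A) •
        ((A - (A i j)⁻¹ • (A * Matrix.single j i (1 : ℂ) * A))ᴴ *
          (A - (A i j)⁻¹ • (A * Matrix.single j i (1 : ℂ) * A))))
    = (2 : ℝ) • (Aᴴ * A) - (2 / frobSq A) • ((Aᴴ * A) * (Aᴴ * A)) := by
  by_cases hm : m = 0
  · subst hm; ext p q; exact p.elim0
  by_cases hn : n = 0
  · subst hn
    have hG : Aᴴ * A = 0 := by ext p q; simp [Matrix.mul_apply]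
    simp [hG]
  have i0 : Fin n := ⟨0, Nat.pos_of_ne_zero hn⟩
  have j0 : Fin m := ⟨0, Nat.pos_of_ne_zero hm⟩
  have hFpos : 0 < frobSq A := by
    refine Finset.sum_pos' (fun _ _ => Finset.sum_nonneg fun _ _ => by positivity)
      ⟨i0, Finset.mem_univ _, ?_⟩
    exact Finset.sum_pos' (fun _ _ => by positivity)
      ⟨j0, Finset.mem_univ _, pow_pos (norm_pos_iff.mpr (hA i0 j0)) 2⟩
  have hF : ((frobSq A : ℝ) : ℂ) ≠ 0 := by exact_mod_cast ne_of_gt hFpos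
  have hdiv : ∀ (a : ℂ) {p q : ℕ} (X : Matrix (Fin p) (Fin q) ℂ),
      (a / ((frobSq A : ℝ) : ℂ)) • X = (((frobSq A : ℝ) : ℂ))⁻¹ • (a • X) := by
    intro a p q X
    rw [smul_smul, div_eq_mul_inv, mul_comm]
  have hS1 : ∑ i : Fin n, ∑ j : Fin m,
      (((‖A i j‖^2 : ℝ) : ℂ) / ((frobSq A : ℝ) : ℂ)) • (Aᴴ * A) = Aᴴ * A := by
    simp only [← Finset.sum_smul, ← Finset.sum_div]
    have : (∑ i : Fin n, ∑ j : Fin m, ((‖A i j‖^2 : ℝ) : ℂ)) = ((frobSq A : ℝ) : ℂ) := by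
      rw [frobSq]; push_cast; rfl
    rw [this, div_self hF, one_smul]
  have hS2 : ∑ i : Fin n, ∑ j : Fin m,
      (A i j / ((frobSq A : ℝ) : ℂ)) • (Aᴴ * (Matrix.single i j (1:ℂ) * (Aᴴ * A)))
      = (((frobSq A : ℝ) : ℂ))⁻¹ • ((Aᴴ * A) * (Aᴴ * A)) := by
    simp only [hdiv, ← Finset.smul_sum]
    congr 1
    have : ∀ (i : Fin n) (j : Fin m),
        (A i j) • (Aᴴ * (Matrix.single i j (1:ℂ) * (Aᴴ * A)))
        = Aᴴ * (((A i j) • Matrix.single i j (1:ℂ)) * (Aᴴ * A)) := by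
      intro i j; simp only [Matrix.mul_smul, Matrix.smul_mul]
    simp only [this]
    simp only [← Matrix.mul_sum, ← Matrix.sum_mul]
    rw [sum_smul_std, ← Matrix.mul_assoc]
  have hS3 : ∑ i : Fin n, ∑ j : Fin m,
      (star (A i j) / ((frobSq A : ℝ) : ℂ)) • ((Aᴴ * A) * (Matrix.single j i (1:ℂ) * A))
      = (((frobSq A : ℝ) : ℂ))⁻¹ • ((Aᴴ * A) * (Aᴴ * A)) := by
    simp only [hdiv, ← Finset.smul_sum]
    congr 1
    have : ∀ (i : Fin n) (j : Fin m),
        (star (A i j)) • ((Aᴴ * A) * (Matrix.single j i (1:ℂ) * A))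
        = (Aᴴ * A) * (((star (A i j)) • Matrix.single j i (1:ℂ)) * A) := by
      intro i j; simp only [Matrix.mul_smul, Matrix.smul_mul]
    simp only [this]
    simp only [← Matrix.mul_sum, ← Matrix.sum_mul]
    rw [sum_star_smul_std]
  have hS4 : ∑ i : Fin n, ∑ j : Fin m,
      (((Aᴴ * A) j j) / ((frobSq A : ℝ) : ℂ)) • (Aᴴ * (Matrix.single i i (1:ℂ) * A))
      = Aᴴ * A := by
    simp only [hdiv, ← Finset.smul_sum, ← Finset.sum_smul]
    rw [← frobSq_eq_trace, ← Matrix.mul_sum, ← Matrix.sum_mul, sum_std_one,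
      Matrix.one_mul, smul_smul, inv_mul_cancel₀ hF, one_smul]
  calc (∑ i : Fin n, ∑ j : Fin m,
      (‖A i j‖ ^ 2 / frobSq A) •
        ((A - (A i j)⁻¹ • (A * Matrix.single j i (1 : ℂ) * A))ᴴ *
          (A - (A i j)⁻¹ • (A * Matrix.single j i (1 : ℂ) * A))))
      = ∑ i : Fin n, ∑ j : Fin m,
        (((‖A i j‖^2 : ℝ) / (frobSq A : ℂ)) • (Aᴴ * A)
          - (A i j / (frobSq A : ℂ)) • (Aᴴ * (Matrix.single i j (1:ℂ) * (Aᴴ * A)))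
          - (star (A i j) / (frobSq A : ℂ)) • ((Aᴴ * A) * (Matrix.single j i (1:ℂ) * A))
          + (((Aᴴ * A) j j) / (frobSq A : ℂ)) • (Aᴴ * (Matrix.single i i (1:ℂ) * A))) :=
        Finset.sum_congr rfl fun i _ => Finset.sum_congr rfl fun j _ => term_eq A i j (hA i j)
    _ = (2 : ℝ) • (Aᴴ * A) - (2 / frobSq A) • ((Aᴴ * A) * (Aᴴ * A)) := by
        simp only [Finset.sum_sub_distrib, Finset.sum_add_distrib]
        rw [hS1, hS2, hS3, hS4, real_smul_mat, real_smul_mat]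
        push_cast
        match_scalars
        · ring
        · field_simp; ring
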